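/- Let T be a tree with maximum degree at most 4 and no vertex of degree 2 that admits a convex rectilinear planar drawing. Then T contains at most two splitters. -/

import Mathlib

open SimpleGraph

namespace TurnRegular

/-- Degree of a vertex: the cardinality of its neighbor set. -/
noncomputable def deg {V : Type*} (G : SimpleGraph V) (v : V) : ℕ :=
  (G.neighborSet v).ncard

/-- A splitter: a vertex adjacent to at least three non-leaf vertices. -/
def IsSplitter {V : Type*} (G : SimpleGraph V) (v : V) : Prop :=
  3 ≤ {u | G.Adj v u ∧ 2 ≤ deg G u}.ncard

/-- A `k`-fork: a vertex of degree exactly `k+1` adjacent to at least `k` leaves. -/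
def IsKFork {V : Type*} (k : ℕ) (G : SimpleGraph V) (v : V) : Prop :=
  deg G v = k + 1 ∧ k ≤ {u | G.Adj v u ∧ deg G u = 1}.ncard

/-- A `k`-caterpillar: a tree with at least three vertices whose non-leaf vertices
form the vertex set of a path, every non-leaf vertex having degree between `3` and `k`. -/
def IsKCaterpillar (k : ℕ) {W : Type*} (G : SimpleGraph W) : Prop :=
  G.IsTree ∧ 3 ≤ Nat.card W ∧
  (∃ (a b : W) (p : G.Walk a b), p.IsPath ∧ ∀ v, 2 ≤ deg G v ↔ v ∈ p.support) ∧
  (∀ v, 2 ≤ deg G v → 3 ≤ deg G v ∧ deg G v ≤ k)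

/-- The vertex set of the connected component of `G - v` containing `u`
(for `u ≠ v`): all vertices reachable from `u` by a walk avoiding `v`. -/
def compAway {V : Type*} (G : SimpleGraph V) (v u : V) : Set V :=
  {w | ∃ p : G.Walk u w, v ∉ p.support}

/-- Vertex set of the branch of `G` at `v` through the component of `G - v`
containing `u`. -/
def branchVerts {V : Type*} (G : SimpleGraph V) (v u : V) : Set V :=
  insert v (compAway G v u)

/-- The branch of `G` at `v` through the component of `G - v` containing `u`:
the subgraph induced on `{v} ∪ C`. -/
def branch {V : Type*} (G : SimpleGraph V) (v u : V) :
    SimpleGraph (branchVerts G v u) :=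
  G.induce (branchVerts G v u)

/-- A 4-windmill: a tree of maximum degree at most 4 with exactly one splitter `v`,
such that `v` has degree 4 and each of the four branches at `v` is a 3-caterpillar. -/
def Is4Windmill {V : Type*} (G : SimpleGraph V) : Prop :=
  G.IsTree ∧ (∀ w, deg G w ≤ 4) ∧
  ∃ v, (∀ w, IsSplitter G w ↔ w = v) ∧ deg G v = 4 ∧
    ∀ u, G.Adj v u → IsKCaterpillar 3 (branch G v u)

/-- A 3-windmill: a tree of maximum degree at most 4 with exactly one splitter `v`,
such that `v` has exactly three non-leaf neighbors, every other neighbor of `v`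
is a leaf, and among the three branches at `v` through the components containing
the non-leaf neighbors, two are 3-caterpillars and one is a 4-caterpillar. -/
def Is3Windmill {V : Type*} (G : SimpleGraph V) : Prop :=
  G.IsTree ∧ (∀ w, deg G w ≤ 4) ∧
  ∃ v, (∀ w, IsSplitter G w ↔ w = v) ∧
    ∃ u₁ u₂ u₃, u₁ ≠ u₂ ∧ u₁ ≠ u₃ ∧ u₂ ≠ u₃ ∧
      G.Adj v u₁ ∧ G.Adj v u₂ ∧ G.Adj v u₃ ∧
      2 ≤ deg G u₁ ∧ 2 ≤ deg G u₂ ∧ 2 ≤ deg G u₃ ∧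
      (∀ u, G.Adj v u → 2 ≤ deg G u → u = u₁ ∨ u = u₂ ∨ u = u₃) ∧
      (∀ u, G.Adj v u → u ≠ u₁ → u ≠ u₂ → u ≠ u₃ → deg G u = 1) ∧
      IsKCaterpillar 3 (branch G v u₁) ∧ IsKCaterpillar 3 (branch G v u₂) ∧
      IsKCaterpillar 4 (branch G v u₃)

/-- A double-windmill: a tree of maximum degree at most 4 with exactly two
splitters `u` and `v` such that (i) every vertex strictly between `u` and `v`
on the `u`–`v` path is adjacent, apart from its neighbors on the path, only
to leaves; (ii) each of `u` and `v` has exactly three non-leaf neighbors and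
every other neighbor is a leaf; (iii) for each of `u` and `v`, the two branches
at it through the components that contain one of its non-leaf neighbors but not
the other splitter are 3-caterpillars. -/
def IsDoubleWindmill {V : Type*} (G : SimpleGraph V) : Prop :=
  G.IsTree ∧ (∀ w, deg G w ≤ 4) ∧
  ∃ u v, u ≠ v ∧ (∀ w, IsSplitter G w ↔ (w = u ∨ w = v)) ∧
    (∀ p : G.Walk u v, p.IsPath →
      ∀ w ∈ p.support, w ≠ u → w ≠ v →
        ∀ x, G.Adj w x → x ∉ p.support → deg G x = 1) ∧
    {x | G.Adj u x ∧ 2 ≤ deg G x}.ncard = 3 ∧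
    {x | G.Adj v x ∧ 2 ≤ deg G x}.ncard = 3 ∧
    (∀ x, G.Adj u x → deg G x = 1 ∨ 2 ≤ deg G x) ∧
    (∀ x, G.Adj v x → deg G x = 1 ∨ 2 ≤ deg G x) ∧
    (∀ x, G.Adj u x → 2 ≤ deg G x → v ∉ branchVerts G u x →
      IsKCaterpillar 3 (branch G u x)) ∧
    (∀ x, G.Adj v x → 2 ≤ deg G x → u ∉ branchVerts G v x →
      IsKCaterpillar 3 (branch G v x))

/-- The closed axis-parallel ray starting at `p` and passing through `q`
(extended to infinity beyond `q`). -/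
def ray (p q : ℝ × ℝ) : Set (ℝ × ℝ) :=
  {x | ∃ t : ℝ, 0 ≤ t ∧ x = p + t • (q - p)}

/-- A rectilinear planar drawing of `G`: an injective placement of the vertices
in the plane such that each edge is a horizontal or vertical segment, and the
segments of two distinct edges meet at most in the image of a common endpoint. -/
def IsRectDrawing {V : Type*} (G : SimpleGraph V) (Γ : V → ℝ × ℝ) : Prop :=
  Function.Injective Γ ∧
  (∀ u v, G.Adj u v → (Γ u).1 = (Γ v).1 ∨ (Γ u).2 = (Γ v).2) ∧
  (∀ u v x y, G.Adj u v → G.Adj x y → s(u, v) ≠ s(x, y) →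
    ∀ p ∈ segment ℝ (Γ u) (Γ v) ∩ segment ℝ (Γ x) (Γ y),
      ∃ w, (w = u ∨ w = v) ∧ (w = x ∨ w = y) ∧ p = Γ w)

/-- The drawn point set of edge `{a, b}` in the drawing `Γ`: its segment, where
the edge is extended beyond each leaf endpoint to an infinite axis-parallel ray. -/
noncomputable def edgeDrawn {V : Type*} (G : SimpleGraph V) (Γ : V → ℝ × ℝ)
    (a b : V) : Set (ℝ × ℝ) :=
  (if deg G b = 1 then ray (Γ a) (Γ b) else segment ℝ (Γ a) (Γ b)) ∪
  (if deg G a = 1 then ray (Γ b) (Γ a) else segment ℝ (Γ a) (Γ b))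

/-- A convex rectilinear planar drawing: a rectilinear planar drawing in which,
after extending every edge incident to a leaf beyond that leaf to an infinite
axis-parallel ray, the resulting point sets of two distinct edges still meet at
most in the image of a common endpoint. -/
def IsConvexRectDrawing {V : Type*} (G : SimpleGraph V) (Γ : V → ℝ × ℝ) : Prop :=
  IsRectDrawing G Γ ∧
  (∀ u v x y, G.Adj u v → G.Adj x y → s(u, v) ≠ s(x, y) →
    ∀ p ∈ edgeDrawn G Γ u v ∩ edgeDrawn G Γ x y,
      ∃ w, (w = u ∨ w = v) ∧ (w = x ∨ w = y) ∧ p = Γ w)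

/-- `G` admits a convex rectilinear planar drawing. -/
def HasConvexDrawing {V : Type*} (G : SimpleGraph V) : Prop :=
  ∃ Γ : V → ℝ × ℝ, IsConvexRectDrawing G Γ



/-- Axis directions. -/
inductive Dir | E | N | W | S
deriving DecidableEq

/-- Closed axis-parallel half-line from a point. -/
def hl : Dir → ℝ × ℝ → Set (ℝ × ℝ)
  | .E, p => {z | z.2 = p.2 ∧ p.1 ≤ z.1}
  | .N, p => {z | z.1 = p.1 ∧ p.2 ≤ z.2}
  | .W, p => {z | z.2 = p.2 ∧ z.1 ≤ p.1}
  | .S, p => {z | z.1 = p.1 ∧ z.2 ≤ p.2}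

lemma self_mem_hl (d : Dir) (p : ℝ × ℝ) : p ∈ hl d p := by
  cases d <;> exact ⟨rfl, le_refl _⟩

lemma exists_far_mem_hl (d : Dir) (p : ℝ × ℝ) : ∃ z ∈ hl d p, z ≠ p := by
  cases d
  · exact ⟨(p.1 + 1, p.2), ⟨rfl, by simp⟩, by intro h; have := congrArg Prod.fst h; simp at this⟩
  · exact ⟨(p.1, p.2 + 1), ⟨rfl, by simp⟩, by intro h; have := congrArg Prod.snd h; simp at this⟩
  · exact ⟨(p.1 - 1, p.2), ⟨rfl, by simp⟩, by intro h; have := congrArg Prod.fst h; simp at this⟩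
  · exact ⟨(p.1, p.2 - 1), ⟨rfl, by simp⟩, by intro h; have := congrArg Prod.snd h; simp at this⟩

/-- The six possible shapes of a "corner" (union of two half-lines from a point). -/
inductive Shape
  | V (a : ℝ) | Hh (b : ℝ) | NE (a b : ℝ) | NW (a b : ℝ) | SW (a b : ℝ) | SE (a b : ℝ)

instance : Nonempty Shape := ⟨Shape.V 0⟩

namespace Shape

def pts : Shape → Set (ℝ × ℝ)
  | .V a => {z | z.1 = a}
  | .Hh b => {z | z.2 = b}
  | .NE a b => {z | (z.1 = a ∧ b ≤ z.2) ∨ (z.2 = b ∧ a ≤ z.1)}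
  | .NW a b => {z | (z.1 = a ∧ b ≤ z.2) ∨ (z.2 = b ∧ z.1 ≤ a)}
  | .SW a b => {z | (z.1 = a ∧ z.2 ≤ b) ∨ (z.2 = b ∧ z.1 ≤ a)}
  | .SE a b => {z | (z.1 = a ∧ z.2 ≤ b) ∨ (z.2 = b ∧ a ≤ z.1)}

def reg : Shape → Bool → Set (ℝ × ℝ)
  | .V a, false => {z | z.1 < a} | .V a, true => {z | a < z.1}
  | .Hh b, false => {z | z.2 < b} | .Hh b, true => {z | b < z.2}
  | .NE a b, false => {z | z.1 < a ∨ z.2 < b} | .NE a b, true => {z | a < z.1 ∧ b < z.2}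
  | .NW a b, false => {z | a < z.1 ∨ z.2 < b} | .NW a b, true => {z | z.1 < a ∧ b < z.2}
  | .SW a b, false => {z | a < z.1 ∨ b < z.2} | .SW a b, true => {z | z.1 < a ∧ z.2 < b}
  | .SE a b, false => {z | z.1 < a ∨ b < z.2} | .SE a b, true => {z | a < z.1 ∧ z.2 < b}

/-- diagonal consumed by a shape with a chosen region: 0=NE,1=NW,2=SW,3=SE -/
def dio : Shape → Bool → ℕ
  | .V _, false => 0 | .V _, true => 2
  | .Hh _, false => 1 | .Hh _, true => 3
  | .NE _ _, false => 0 | .NE _ _, true => 1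
  | .NW _ _, false => 1 | .NW _ _, true => 0
  | .SW _ _, false => 2 | .SW _ _, true => 3
  | .SE _ _, false => 3 | .SE _ _, true => 2

lemma dio_lt_four (s : Shape) (r : Bool) : dio s r < 4 := by
  cases s <;> cases r <;> simp [dio]

lemma isOpen_reg (s : Shape) (r : Bool) : IsOpen (reg s r) := by
  cases s <;> cases r <;>
  · first
    | exact isOpen_lt continuous_fst continuous_const
    | exact isOpen_lt continuous_const continuous_fst
    | exact isOpen_lt continuous_snd continuous_const
    | exact isOpen_lt continuous_const continuous_snd
    | exact IsOpen.union (isOpen_lt continuous_fst continuous_const) (isOpen_lt continuous_snd continuous_const)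
    | exact IsOpen.union (isOpen_lt continuous_const continuous_fst) (isOpen_lt continuous_snd continuous_const)
    | exact IsOpen.union (isOpen_lt continuous_fst continuous_const) (isOpen_lt continuous_const continuous_snd)
    | exact IsOpen.union (isOpen_lt continuous_const continuous_fst) (isOpen_lt continuous_const continuous_snd)
    | exact IsOpen.inter (isOpen_lt continuous_fst continuous_const) (isOpen_lt continuous_snd continuous_const)
    | exact IsOpen.inter (isOpen_lt continuous_const continuous_fst) (isOpen_lt continuous_snd continuous_const)
    | exact IsOpen.inter (isOpen_lt continuous_fst continuous_const) (isOpen_lt continuous_const continuous_snd)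
    | exact IsOpen.inter (isOpen_lt continuous_const continuous_fst) (isOpen_lt continuous_const continuous_snd)

lemma disjoint_reg (s : Shape) : Disjoint (reg s false) (reg s true) := by
  rw [Set.disjoint_left]
  cases s <;> intro z hz hz' <;> simp only [reg, Set.mem_setOf_eq] at hz hz' <;>
    first
      | linarith
      | (rcases hz with h | h <;> linarith [hz'.1, hz'.2])

lemma cover_reg (s : Shape) (z : ℝ × ℝ) (h : z ∉ pts s) : z ∈ reg s false ∪ reg s true := by
  cases s <;> simp only [pts, Set.mem_setOf_eq, not_or, not_and] at h <;>
    simp only [reg, Set.mem_union, Set.mem_setOf_eq]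
  case V a => rcases lt_trichotomy z.1 a with h1 | h1 | h1
              · exact Or.inl h1
              · exact absurd h1 h
              · exact Or.inr h1
  case Hh b => rcases lt_trichotomy z.2 b with h1 | h1 | h1
               · exact Or.inl h1
               · exact absurd h1 h
               · exact Or.inr h1
  case NE a b =>
    obtain ⟨h1, h2⟩ := h
    rcases lt_trichotomy z.1 a with hx | hx | hx
    · exact Or.inl (Or.inl hx)
    · have := h1 hx; push_neg at this; exact Or.inl (Or.inr this)
    · rcases lt_trichotomy z.2 b with hy | hy | hy
      · exact Or.inl (Or.inr hy)
      · exact absurd (le_of_lt hx) (h2 hy)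
      · exact Or.inr ⟨hx, hy⟩
  case NW a b =>
    obtain ⟨h1, h2⟩ := h
    rcases lt_trichotomy z.1 a with hx | hx | hx
    · rcases lt_trichotomy z.2 b with hy | hy | hy
      · exact Or.inl (Or.inr hy)
      · exact absurd (le_of_lt hx) (h2 hy)
      · exact Or.inr ⟨hx, hy⟩
    · have := h1 hx; push_neg at this; exact Or.inl (Or.inr this)
    · exact Or.inl (Or.inl hx)
  case SW a b =>
    obtain ⟨h1, h2⟩ := h
    rcases lt_trichotomy z.1 a with hx | hx | hx
    · rcases lt_trichotomy z.2 b with hy | hy | hy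
      · exact Or.inr ⟨hx, hy⟩
      · exact absurd (le_of_lt hx) (h2 hy)
      · exact Or.inl (Or.inr hy)
    · have := h1 hx; push_neg at this; exact Or.inl (Or.inr this)
    · exact Or.inl (Or.inl hx)
  case SE a b =>
    obtain ⟨h1, h2⟩ := h
    rcases lt_trichotomy z.1 a with hx | hx | hx
    · exact Or.inl (Or.inl hx)
    · have := h1 hx; push_neg at this; exact Or.inl (Or.inr this)
    · rcases lt_trichotomy z.2 b with hy | hy | hy
      · exact Or.inr ⟨hx, hy⟩
      · exact absurd (le_of_lt hx) (h2 hy)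
      · exact Or.inl (Or.inr hy)

end Shape


set_option maxHeartbeats 4000000 in
lemma Shape.clash (s₁ s₂ : Shape) (r₁ r₂ : Bool) (hδ : s₁.dio r₁ = s₂.dio r₂)
    (h₁₂ : s₂.pts ⊆ s₁.reg r₁) (h₂₁ : s₁.pts ⊆ s₂.reg r₂) : False := by
  rcases s₁ with a₁ | b₁ | ⟨a₁, b₁⟩ | ⟨a₁, b₁⟩ | ⟨a₁, b₁⟩ | ⟨a₁, b₁⟩ <;>
  rcases s₂ with a₂ | b₂ | ⟨a₂, b₂⟩ | ⟨a₂, b₂⟩ | ⟨a₂, b₂⟩ | ⟨a₂, b₂⟩ <;>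
  cases r₁ <;> cases r₂ <;> simp only [Shape.dio] at hδ <;>
  first
  | omega
  | (have u1 := @h₁₂ (a₂, (0:ℝ)) rfl
     have u2 := @h₂₁ (a₁, (0:ℝ)) rfl
     simp only [Shape.reg, Set.mem_setOf_eq] at u1 u2
     linarith)
  | (have u1 := @h₁₂ ((0:ℝ), b₂) rfl
     have u2 := @h₂₁ ((0:ℝ), b₁) rfl
     simp only [Shape.reg, Set.mem_setOf_eq] at u1 u2
     linarith)
  | (have u1 := @h₁₂ (a₂, b₂) (Or.inl ⟨rfl, le_refl b₂⟩)
     have u2 := @h₂₁ (a₁, b₁) (Or.inl ⟨rfl, le_refl b₁⟩)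
     simp only [Shape.reg, Set.mem_setOf_eq] at u1 u2
     linarith [u1.1, u1.2, u2.1, u2.2])
  | (have u := @h₂₁ (a₁, b₂) rfl
     simp only [Shape.reg, Set.mem_setOf_eq] at u
     linarith [u.1, u.2])
  | (have u := @h₁₂ (a₂, b₁) rfl
     simp only [Shape.reg, Set.mem_setOf_eq] at u
     linarith [u.1, u.2])
  | (have u := @h₂₁ (a₂, b₁) rfl
     simp only [Shape.reg, Set.mem_setOf_eq] at u
     linarith [u.1, u.2])
  | (have u := @h₁₂ (a₁, b₂) rfl
     simp only [Shape.reg, Set.mem_setOf_eq] at u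
     linarith [u.1, u.2])
  | (have u1 := @h₁₂ (a₂, max b₂ b₁ + 1)
       (Or.inl ⟨rfl, (by linarith [le_max_left b₂ b₁] : b₂ ≤ max b₂ b₁ + 1)⟩)
     have u2 := @h₂₁ (a₁, max b₁ b₂ + 1)
       (Or.inl ⟨rfl, (by linarith [le_max_left b₁ b₂] : b₁ ≤ max b₁ b₂ + 1)⟩)
     simp only [Shape.reg, Set.mem_setOf_eq] at u1 u2
     rcases u1 with u1 | u1 <;> rcases u2 with u2 | u2 <;>
       linarith [le_max_right b₂ b₁, le_max_right b₁ b₂])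
  | (have u1 := @h₁₂ (a₂, min b₂ b₁ - 1)
       (Or.inl ⟨rfl, (by linarith [min_le_left b₂ b₁] : min b₂ b₁ - 1 ≤ b₂)⟩)
     have u2 := @h₂₁ (a₁, min b₁ b₂ - 1)
       (Or.inl ⟨rfl, (by linarith [min_le_left b₁ b₂] : min b₁ b₂ - 1 ≤ b₁)⟩)
     simp only [Shape.reg, Set.mem_setOf_eq] at u1 u2
     rcases u1 with u1 | u1 <;> rcases u2 with u2 | u2 <;>
       linarith [min_le_right b₂ b₁, min_le_right b₁ b₂])
  | (have u := @h₁₂ (max a₂ a₁ + 1, b₂)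
       (Or.inr ⟨rfl, (by linarith [le_max_left a₂ a₁] : a₂ ≤ max a₂ a₁ + 1)⟩)
     simp only [Shape.reg, Set.mem_setOf_eq] at u
     first
     | linarith [le_max_right a₂ a₁]
     | (obtain ⟨u, -⟩ := u; linarith [le_max_right a₂ a₁])
     | (rcases u with u | u <;> linarith [le_max_right a₂ a₁]))
  | (have u := @h₂₁ (max a₁ a₂ + 1, b₁)
       (Or.inr ⟨rfl, (by linarith [le_max_left a₁ a₂] : a₁ ≤ max a₁ a₂ + 1)⟩)
     simp only [Shape.reg, Set.mem_setOf_eq] at u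
     first
     | linarith [le_max_right a₁ a₂]
     | (obtain ⟨u, -⟩ := u; linarith [le_max_right a₁ a₂])
     | (rcases u with u | u <;> linarith [le_max_right a₁ a₂]))
  | (have u := @h₂₁ (min a₁ a₂ - 1, b₁)
       (Or.inr ⟨rfl, (by linarith [min_le_left a₁ a₂] : min a₁ a₂ - 1 ≤ a₁)⟩)
     simp only [Shape.reg, Set.mem_setOf_eq] at u
     first
     | linarith [min_le_right a₁ a₂]
     | (obtain ⟨u, -⟩ := u; linarith [min_le_right a₁ a₂])
     | (rcases u with u | u <;> linarith [min_le_right a₁ a₂]))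
  | (have u := @h₁₂ (min a₂ a₁ - 1, b₂)
       (Or.inr ⟨rfl, (by linarith [min_le_left a₂ a₁] : min a₂ a₁ - 1 ≤ a₂)⟩)
     simp only [Shape.reg, Set.mem_setOf_eq] at u
     first
     | linarith [min_le_right a₂ a₁]
     | (obtain ⟨u, -⟩ := u; linarith [min_le_right a₂ a₁])
     | (rcases u with u | u <;> linarith [min_le_right a₂ a₁]))
  | (have u := @h₂₁ (a₁, max b₁ b₂ + 1)
       (Or.inl ⟨rfl, (by linarith [le_max_left b₁ b₂] : b₁ ≤ max b₁ b₂ + 1)⟩)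
     simp only [Shape.reg, Set.mem_setOf_eq] at u
     first
     | linarith [le_max_right b₁ b₂]
     | (obtain ⟨u, -⟩ := u; linarith [le_max_right b₁ b₂])
     | (rcases u with u | u <;> linarith [le_max_right b₁ b₂]))
  | (have u := @h₁₂ (a₂, max b₂ b₁ + 1)
       (Or.inl ⟨rfl, (by linarith [le_max_left b₂ b₁] : b₂ ≤ max b₂ b₁ + 1)⟩)
     simp only [Shape.reg, Set.mem_setOf_eq] at u
     first
     | linarith [le_max_right b₂ b₁]
     | (obtain ⟨u, -⟩ := u; linarith [le_max_right b₂ b₁])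
     | (rcases u with u | u <;> linarith [le_max_right b₂ b₁]))
  | (have u := @h₁₂ (a₂, min b₂ b₁ - 1)
       (Or.inl ⟨rfl, (by linarith [min_le_left b₂ b₁] : min b₂ b₁ - 1 ≤ b₂)⟩)
     simp only [Shape.reg, Set.mem_setOf_eq] at u
     first
     | linarith [min_le_right b₂ b₁]
     | (obtain ⟨u, -⟩ := u; linarith [min_le_right b₂ b₁])
     | (rcases u with u | u <;> linarith [min_le_right b₂ b₁]))
  | (have u := @h₂₁ (a₁, min b₁ b₂ - 1)
       (Or.inl ⟨rfl, (by linarith [min_le_left b₁ b₂] : min b₁ b₂ - 1 ≤ b₁)⟩)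
     simp only [Shape.reg, Set.mem_setOf_eq] at u
     first
     | linarith [min_le_right b₁ b₂]
     | (obtain ⟨u, -⟩ := u; linarith [min_le_right b₁ b₂])
     | (rcases u with u | u <;> linarith [min_le_right b₁ b₂]))


section Graph
variable {V : Type*} [Fintype V] {G : SimpleGraph V}

lemma deg_eq_degree [DecidableRel G.Adj] (v : V) : deg G v = G.degree v := by
  rw [deg, SimpleGraph.degree, neighborFinset_def, Set.ncard_eq_toFinset_card']

lemma setcard_eq_filter (p : V → Prop) [DecidablePred p] :
    {u | p u}.ncard = (Finset.univ.filter p).card := by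
  rw [Set.ncard_eq_toFinset_card', Set.toFinset_setOf]

/-- interior vertices of a path have two distinct neighbors on the path -/
lemma interior_two_adj {a b w : V} (p : G.Walk a b) (hp : p.IsPath)
    (hw : w ∈ p.support) (hwa : w ≠ a) (hwb : w ≠ b) :
    ∃ u₁ u₂, u₁ ≠ u₂ ∧ G.Adj w u₁ ∧ G.Adj w u₂ ∧ u₁ ∈ p.support ∧ u₂ ∈ p.support := by
  induction p with
  | nil => simp at hw; exact absurd hw hwa
  | @cons a c b h q ih =>
    rw [SimpleGraph.Walk.support_cons, List.mem_cons] at hw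
    rcases hw with rfl | hw
    · exact absurd rfl hwa
    · by_cases hwc : w = c
      · subst hwc
        cases q with
        | nil => exact absurd rfl hwb
        | cons h' q' =>
          refine ⟨a, _, ?_, h.symm, h', by simp, by simp⟩
          intro had
          have hnd := hp.2
          rw [SimpleGraph.Walk.support_cons, List.nodup_cons] at hnd
          exact hnd.1 (by rw [had]; simp)
      · obtain ⟨u₁, u₂, h12, ha1, ha2, hs1, hs2⟩ := ih hp.of_cons hw hwc hwb
        exact ⟨u₁, u₂, h12, ha1, ha2, by simp [hs1], by simp [hs2]⟩

lemma interior_big_deg {a b w : V} (p : G.Walk a b) (hp : p.IsPath)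
    (hw : w ∈ p.support) (hwa : w ≠ a) (hwb : w ≠ b) : 2 ≤ deg G w := by
  obtain ⟨u₁, u₂, h12, ha1, ha2, -, -⟩ := interior_two_adj p hp hw hwa hwb
  have : 1 < (G.neighborSet w).ncard := by
    rw [Set.one_lt_ncard_iff (Set.toFinite _)]
    exact ⟨u₁, u₂, ha1, ha2, h12⟩
  exact this

lemma exists_succ {a b : V} (w : G.Walk a b) (hne : a ≠ b) :
    ∃ u, G.Adj a u ∧ u ∈ w.support := by
  cases w with
  | nil => exact absurd rfl hne
  | cons h q => exact ⟨_, h, by simp⟩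

lemma deg_pos_of_adj {v u : V} (h : G.Adj v u) : 1 ≤ deg G v := by
  have : 0 < (G.neighborSet v).ncard := by
    rw [Set.ncard_pos (Set.toFinite _)]
    exact ⟨u, h⟩
  exact this

/-- a neighbor of a leaf is internal, provided some vertex has degree ≥ 3 -/
lemma leaf_nbr_internal (htree : G.IsTree) {s ℓ u : V} (hs : 3 ≤ deg G s)
    (hℓ : deg G ℓ = 1) (hu : G.Adj ℓ u) : 2 ≤ deg G u := by
  classical
  have hse : ℓ ≠ s := by intro h; rw [h] at hℓ; omega
  obtain ⟨w⟩ := htree.isConnected.preconnected ℓ s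
  set p := w.toPath with hp
  obtain ⟨u', hadj, hsup⟩ := exists_succ p.1 hse
  obtain ⟨x, hx⟩ := Set.ncard_eq_one.mp hℓ
  have hux : u = x := by have : u ∈ G.neighborSet ℓ := hu; rwa [hx] at this
  have hux' : u' = x := by have : u' ∈ G.neighborSet ℓ := hadj; rwa [hx] at this
  have huu : u' = u := by rw [hux, hux']
  subst huu
  by_cases hus : u' = s
  · rw [hus]; omega
  · exact interior_big_deg p.1 p.2 hsup (fun h => G.irrefl (h ▸ hadj)) hus

lemma splitter_deg {s : V} (hs : IsSplitter G s) : 3 ≤ deg G s := by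
  refine le_trans hs (Set.ncard_le_ncard ?_ (Set.toFinite _))
  intro u hu; exact hu.1

lemma nld_pos (htree : G.IsTree) (hno2 : ∀ v, deg G v ≠ 2) {s v : V}
    (hs : IsSplitter G s) (hv : 2 ≤ deg G v) :
    1 ≤ {u | G.Adj v u ∧ 2 ≤ deg G u}.ncard := by
  have hsd := splitter_deg hs
  suffices h : ∃ u, G.Adj v u ∧ 2 ≤ deg G u by
    rw [Nat.succ_le_iff, Set.ncard_pos (Set.toFinite _)]; exact h
  classical
  by_cases hvs : v = s
  · subst hvs
    have : 0 < {u | G.Adj v u ∧ 2 ≤ deg G u}.ncard := lt_of_lt_of_le (by norm_num) hs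
    rw [Set.ncard_pos (Set.toFinite _)] at this
    exact this
  · obtain ⟨w⟩ := htree.isConnected.preconnected v s
    set p := w.toPath with hp
    obtain ⟨u, hadj, hsup⟩ := exists_succ p.1 hvs
    refine ⟨u, hadj, ?_⟩
    by_contra hdu
    have h1 : deg G u = 1 := by
      have := deg_pos_of_adj hadj.symm
      have := hno2 u
      omega
    have hus : u ≠ s := by intro h; rw [h] at h1; omega
    have huv : u ≠ v := fun h => G.irrefl (h ▸ hadj)
    have := interior_big_deg p.1 p.2 hsup huv hus
    omega

lemma deg_pos_all (htree : G.IsTree) {s : V} (hs : IsSplitter G s) (v : V) :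
    1 ≤ deg G v := by
  by_cases hvs : v = s
  · subst hvs; have := splitter_deg hs; omega
  · obtain ⟨w⟩ := htree.isConnected.preconnected v s
    obtain ⟨u, hadj, -⟩ := exists_succ w hvs
    exact deg_pos_of_adj hadj

lemma sum_nld [DecidableRel G.Adj] :
    ∑ v ∈ Finset.univ, (Finset.univ.filter fun u => G.Adj v u ∧ 2 ≤ deg G u).card
      = ∑ u ∈ Finset.univ.filter (fun u => 2 ≤ deg G u), G.degree u := by
  classical
  simp_rw [Finset.card_filter]
  rw [Finset.sum_comm, Finset.sum_filter]
  congr 1; ext u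
  by_cases hu : 2 ≤ deg G u
  · simp only [hu, and_true, if_true]
    rw [← Finset.card_filter]
    have : (Finset.univ.filter fun v => G.Adj v u) = G.neighborFinset u := by
      rw [neighborFinset_eq_filter]
      ext x
      simp [SimpleGraph.adj_comm]
    rw [this, SimpleGraph.degree]
  · simp [hu]

/-- The key counting lemma: at least `#splitters + 2` fork vertices. -/
lemma count_forks (htree : G.IsTree) (hno2 : ∀ v, deg G v ≠ 2)
    (hS3 : 3 ≤ {v | IsSplitter G v}.ncard) :
    5 ≤ {v | 2 ≤ deg G v ∧ {u | G.Adj v u ∧ 2 ≤ deg G u}.ncard ≤ 1}.ncard := by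
  classical
  obtain ⟨s, hs⟩ := Set.nonempty_of_ncard_ne_zero (by omega : {v | IsSplitter G v}.ncard ≠ 0)
  have hs : IsSplitter G s := hs
  set nldc : V → ℕ := fun v => {u | G.Adj v u ∧ 2 ≤ deg G u}.ncard with hnldc
  have hnldF : ∀ v, nldc v = (Finset.univ.filter fun u => G.Adj v u ∧ 2 ≤ deg G u).card :=
    fun v => setcard_eq_filter _
  set I : Finset V := Finset.univ.filter (fun v => 2 ≤ deg G v) with hI
  set L : Finset V := Finset.univ.filter (fun v => deg G v = 1) with hL
  set F : Finset V := Finset.univ.filter (fun v => 2 ≤ deg G v ∧ nldc v ≤ 1) with hF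
  set S : Finset V := Finset.univ.filter (fun v => IsSplitter G v) with hSS
  -- conversions of the two ncard statements
  have hS3' : 3 ≤ S.card := by rwa [setcard_eq_filter (fun v => IsSplitter G v)] at hS3
  rw [setcard_eq_filter (fun v => 2 ≤ deg G v ∧ nldc v ≤ 1), ← hF]
  -- basic degree dichotomy
  have hdich : ∀ v : V, deg G v = 1 ∨ 2 ≤ deg G v := by
    intro v
    have h1 := deg_pos_all htree hs v
    have h2 := hno2 v
    omega
  -- partition of univ
  have hIL : Disjoint I L := by
    rw [Finset.disjoint_left]
    intro a ha hb
    simp only [hI, hL, Finset.mem_filter, Finset.mem_univ, true_and] at ha hb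
    omega
  have hunion : I ∪ L = Finset.univ := by
    ext v
    simp only [Finset.mem_union, hI, hL, Finset.mem_filter, Finset.mem_univ, true_and, iff_true]
    rcases hdich v with h | h
    · exact Or.inr h
    · exact Or.inl h
  have hhand : ∑ v, G.degree v = 2 * G.edgeFinset.card := G.sum_degrees_eq_twice_card_edges
  have htreeE : G.edgeFinset.card + 1 = Fintype.card V := htree.card_edgeFinset
  have hcardIL : I.card + L.card = Fintype.card V := by
    rw [← Finset.card_union_of_disjoint hIL, hunion, Finset.card_univ]
  have hdegL : ∀ ℓ ∈ L, G.degree ℓ = 1 := by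
    intro ℓ hℓ
    simp only [hL, Finset.mem_filter, Finset.mem_univ, true_and] at hℓ
    rw [← deg_eq_degree]; exact hℓ
  have hnldL : ∀ ℓ ∈ L, nldc ℓ = 1 := by
    intro ℓ hℓ
    simp only [hL, Finset.mem_filter, Finset.mem_univ, true_and] at hℓ
    obtain ⟨x, hx⟩ := Set.ncard_eq_one.mp hℓ
    have hadj : G.Adj ℓ x := by
      have : x ∈ G.neighborSet ℓ := by rw [hx]; exact rfl
      exact this
    have hint : 2 ≤ deg G x := leaf_nbr_internal htree (splitter_deg hs) hℓ hadj
    have hsing : {u | G.Adj ℓ u ∧ 2 ≤ deg G u} = {x} := by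
      apply Set.eq_singleton_iff_unique_mem.mpr
      refine ⟨⟨hadj, hint⟩, ?_⟩
      intro y hy
      have : y ∈ G.neighborSet ℓ := hy.1
      rwa [hx] at this
    show ({u | G.Adj ℓ u ∧ 2 ≤ deg G u}).ncard = 1
    rw [hsing, Set.ncard_singleton]
  have hsum1 : ∑ v ∈ Finset.univ, nldc v = ∑ u ∈ I, G.degree u := by
    calc ∑ v ∈ Finset.univ, nldc v
        = ∑ v ∈ Finset.univ, (Finset.univ.filter fun u => G.Adj v u ∧ 2 ≤ deg G u).card := by
          exact Finset.sum_congr rfl (fun v _ => hnldF v)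
      _ = ∑ u ∈ I, G.degree u := sum_nld
  have hsplit : ∑ v ∈ Finset.univ, nldc v = ∑ v ∈ I, nldc v + ∑ v ∈ L, nldc v := by
    rw [← hunion, Finset.sum_union hIL]
  have hsumL : ∑ v ∈ L, nldc v = L.card := by
    rw [Finset.sum_congr rfl hnldL, Finset.sum_const, smul_eq_mul, mul_one]
  have hsplitd : ∑ v, G.degree v = ∑ v ∈ I, G.degree v + ∑ v ∈ L, G.degree v := by
    rw [← hunion, Finset.sum_union hIL]
  have hsumLd : ∑ v ∈ L, G.degree v = L.card := by
    rw [Finset.sum_congr rfl hdegL, Finset.sum_const, smul_eq_mul, mul_one]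
  have hFI : F ⊆ I := by
    intro a ha
    simp only [hF, Finset.mem_filter, Finset.mem_univ, true_and] at ha
    simp only [hI, Finset.mem_filter, Finset.mem_univ, true_and]
    exact ha.1
  have hSI : S ⊆ I := by
    intro a ha
    simp only [hSS, Finset.mem_filter, Finset.mem_univ, true_and] at ha
    simp only [hI, Finset.mem_filter, Finset.mem_univ, true_and]
    have := splitter_deg ha; omega
  have hFS : Disjoint F S := by
    rw [Finset.disjoint_left]
    intro a ha hb
    simp only [hF, Finset.mem_filter, Finset.mem_univ, true_and] at ha
    simp only [hSS, Finset.mem_filter, Finset.mem_univ, true_and] at hb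
    have h3 : 3 ≤ nldc a := hb
    omega
  set R : Finset V := I \ (F ∪ S) with hR
  have hIdecomp : I = (F ∪ S) ∪ R := by
    rw [hR, Finset.union_sdiff_of_subset (Finset.union_subset hFI hSI)]
  have hdisjR : Disjoint (F ∪ S) R := Finset.disjoint_sdiff
  have hcardI : I.card = F.card + S.card + R.card := by
    rw [hIdecomp, Finset.card_union_of_disjoint hdisjR, Finset.card_union_of_disjoint hFS]
  have hsumI : ∑ v ∈ I, nldc v
      = ∑ v ∈ F, nldc v + ∑ v ∈ S, nldc v + ∑ v ∈ R, nldc v := by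
    conv_lhs => rw [hIdecomp]
    rw [Finset.sum_union hdisjR, Finset.sum_union hFS]
  have hbF : F.card ≤ ∑ v ∈ F, nldc v := by
    calc F.card = ∑ _v ∈ F, 1 := by rw [Finset.sum_const, smul_eq_mul, mul_one]
      _ ≤ ∑ v ∈ F, nldc v := by
          apply Finset.sum_le_sum
          intro v hv
          simp only [hF, Finset.mem_filter, Finset.mem_univ, true_and] at hv
          exact nld_pos htree hno2 hs hv.1
  have hbS : 3 * S.card ≤ ∑ v ∈ S, nldc v := by
    calc 3 * S.card = ∑ _v ∈ S, 3 := by rw [Finset.sum_const, smul_eq_mul, mul_comm]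
      _ ≤ ∑ v ∈ S, nldc v := by
          apply Finset.sum_le_sum
          intro v hv
          simp only [hSS, Finset.mem_filter, Finset.mem_univ, true_and] at hv
          exact hv
  have hbR : 2 * R.card ≤ ∑ v ∈ R, nldc v := by
    calc 2 * R.card = ∑ _v ∈ R, 2 := by rw [Finset.sum_const, smul_eq_mul, mul_comm]
      _ ≤ ∑ v ∈ R, nldc v := by
          apply Finset.sum_le_sum
          intro v hv
          simp only [hR, Finset.mem_sdiff, Finset.mem_union, not_or, hI, hF,
            Finset.mem_filter, Finset.mem_univ, true_and] at hv
          obtain ⟨h2, hnF, -⟩ := hv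
          by_contra hlt
          exact hnF ⟨h2, by omega⟩
  omega

end Graph

section Drawing
variable {V : Type*} [Fintype V] {G : SimpleGraph V} {Γ : V → ℝ × ℝ}

lemma segment_subset_ray (p q : ℝ × ℝ) : segment ℝ p q ⊆ ray p q := by
  rw [segment_eq_image']
  rintro x ⟨t, ht, rfl⟩
  exact ⟨t, ht.1, rfl⟩

lemma mem_ray_self (p q : ℝ × ℝ) : p ∈ ray p q := ⟨0, le_refl 0, by simp⟩

lemma mem_ray_snd (p q : ℝ × ℝ) : q ∈ ray p q := ⟨1, zero_le_one, by simp⟩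

lemma ray_convex (p q : ℝ × ℝ) : Convex ℝ (ray p q) := by
  rintro x ⟨t1, h1, rfl⟩ y ⟨t2, h2, rfl⟩ a b ha hb hab
  refine ⟨a * t1 + b * t2, add_nonneg (mul_nonneg ha h1) (mul_nonneg hb h2), ?_⟩
  have : a • (p + t1 • (q - p)) + b • (p + t2 • (q - p))
      = (a + b) • p + (a * t1 + b * t2) • (q - p) := by
    simp only [smul_add, smul_smul, add_smul]
    abel
  rw [this, hab, one_smul]

lemma endpoints_mem_edgeDrawn (a b : V) :
    Γ a ∈ edgeDrawn G Γ a b ∧ Γ b ∈ edgeDrawn G Γ a b := by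
  unfold edgeDrawn
  constructor
  · apply Set.mem_union_left
    split_ifs
    · exact mem_ray_self _ _
    · exact left_mem_segment ℝ _ _
  · apply Set.mem_union_left
    split_ifs
    · exact mem_ray_snd _ _
    · exact right_mem_segment ℝ _ _

lemma edgeDrawn_preconnected (a b : V) : IsPreconnected (edgeDrawn G Γ a b) := by
  unfold edgeDrawn
  apply IsPreconnected.union (Γ a)
  · split_ifs
    · exact mem_ray_self _ _
    · exact left_mem_segment ℝ _ _
  · split_ifs
    · exact mem_ray_snd _ _
    · exact left_mem_segment ℝ _ _
  · split_ifs
    · exact (ray_convex _ _).isPreconnected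
    · exact (convex_segment _ _).isPreconnected
  · split_ifs
    · exact (ray_convex _ _).isPreconnected
    · exact (convex_segment _ _).isPreconnected

lemma sym2_ne_of_distinct {a b c d : V} (hac : a ≠ c) (had : a ≠ d) (hbc : b ≠ c) :
    s(a, b) ≠ s(c, d) := by
  intro h
  rw [Sym2.eq_iff] at h
  rcases h with ⟨rfl, rfl⟩ | ⟨rfl, rfl⟩
  · exact hac rfl
  · exact had rfl

lemma conv_disjoint (hc : IsConvexRectDrawing G Γ) {a b c d : V}
    (h1 : G.Adj a b) (h2 : G.Adj c d) (hac : a ≠ c) (had : a ≠ d) (hbc : b ≠ c)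
    (hbd : b ≠ d) : edgeDrawn G Γ a b ∩ edgeDrawn G Γ c d = ∅ := by
  rw [Set.eq_empty_iff_forall_notMem]
  intro p hp
  obtain ⟨w, hw1, hw2, rfl⟩ := hc.2 a b c d h1 h2 (sym2_ne_of_distinct hac had hbc) p hp
  rcases hw1 with rfl | rfl <;> rcases hw2 with h | h <;> simp_all

lemma conv_shareL (hc : IsConvexRectDrawing G Γ) {a b d : V}
    (h1 : G.Adj a b) (h2 : G.Adj a d) (hbd : b ≠ d) :
    edgeDrawn G Γ a b ∩ edgeDrawn G Γ a d ⊆ {Γ a} := by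
  intro p hp
  have hsne : s(a, b) ≠ s(a, d) := by
    intro h
    rw [Sym2.eq_iff] at h
    rcases h with ⟨-, rfl⟩ | ⟨rfl, rfl⟩
    · exact hbd rfl
    · exact G.irrefl h2
  obtain ⟨w, hw1, hw2, rfl⟩ := hc.2 a b a d h1 h2 hsne p hp
  rcases hw1 with rfl | rfl
  · rfl
  · rcases hw2 with rfl | rfl
    · rfl
    · exact absurd rfl hbd

lemma conv_shareR (hc : IsConvexRectDrawing G Γ) {a b d : V}
    (h1 : G.Adj b a) (h2 : G.Adj a d) (hbd : b ≠ d) :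
    edgeDrawn G Γ b a ∩ edgeDrawn G Γ a d ⊆ {Γ a} := by
  intro p hp
  have hsne : s(b, a) ≠ s(a, d) := by
    intro h
    rw [Sym2.eq_iff] at h
    rcases h with ⟨rfl, rfl⟩ | ⟨rfl, -⟩
    · exact G.irrefl h1
    · exact hbd rfl
  obtain ⟨w, hw1, hw2, rfl⟩ := hc.2 b a a d h1 h2 hsne p hp
  rcases hw1 with rfl | rfl
  · rcases hw2 with rfl | rfl
    · rfl
    · exact absurd rfl hbd
  · rfl

lemma ray_eq_hl_N {p q : ℝ × ℝ} (h1 : q.1 = p.1) (h2 : p.2 < q.2) :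
    ray p q = hl Dir.N p := by
  ext z
  constructor
  · rintro ⟨t, ht, rfl⟩
    constructor
    · show p.1 + t * (q.1 - p.1) = p.1
      rw [h1]; ring
    · show p.2 ≤ p.2 + t * (q.2 - p.2)
      nlinarith
  · rintro ⟨hz1, hz2⟩
    refine ⟨(z.2 - p.2) / (q.2 - p.2), div_nonneg (by linarith) (by linarith), ?_⟩
    have hne : q.2 - p.2 ≠ 0 := by linarith
    apply Prod.ext
    · show z.1 = p.1 + _ * (q.1 - p.1)
      rw [h1]; simp [hz1]
    · show z.2 = p.2 + _ * (q.2 - p.2)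
      rw [div_mul_cancel₀ _ hne]; ring

lemma ray_eq_hl_S {p q : ℝ × ℝ} (h1 : q.1 = p.1) (h2 : q.2 < p.2) :
    ray p q = hl Dir.S p := by
  ext z
  constructor
  · rintro ⟨t, ht, rfl⟩
    constructor
    · show p.1 + t * (q.1 - p.1) = p.1
      rw [h1]; ring
    · show p.2 + t * (q.2 - p.2) ≤ p.2
      nlinarith
  · rintro ⟨hz1, hz2⟩
    refine ⟨(z.2 - p.2) / (q.2 - p.2), div_nonneg_iff.mpr (Or.inr ⟨by linarith, by linarith⟩), ?_⟩
    have hne : q.2 - p.2 ≠ 0 := by linarith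
    apply Prod.ext
    · show z.1 = p.1 + _ * (q.1 - p.1)
      rw [h1]; simp [hz1]
    · show z.2 = p.2 + _ * (q.2 - p.2)
      rw [div_mul_cancel₀ _ hne]; ring

lemma ray_eq_hl_E {p q : ℝ × ℝ} (h1 : q.2 = p.2) (h2 : p.1 < q.1) :
    ray p q = hl Dir.E p := by
  ext z
  constructor
  · rintro ⟨t, ht, rfl⟩
    constructor
    · show p.2 + t * (q.2 - p.2) = p.2
      rw [h1]; ring
    · show p.1 ≤ p.1 + t * (q.1 - p.1)
      nlinarith
  · rintro ⟨hz1, hz2⟩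
    refine ⟨(z.1 - p.1) / (q.1 - p.1), div_nonneg (by linarith) (by linarith), ?_⟩
    have hne : q.1 - p.1 ≠ 0 := by linarith
    apply Prod.ext
    · show z.1 = p.1 + _ * (q.1 - p.1)
      rw [div_mul_cancel₀ _ hne]; ring
    · show z.2 = p.2 + _ * (q.2 - p.2)
      rw [h1]; simp [hz1]

lemma ray_eq_hl_W {p q : ℝ × ℝ} (h1 : q.2 = p.2) (h2 : q.1 < p.1) :
    ray p q = hl Dir.W p := by
  ext z
  constructor
  · rintro ⟨t, ht, rfl⟩
    constructor
    · show p.2 + t * (q.2 - p.2) = p.2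
      rw [h1]; ring
    · show p.1 + t * (q.1 - p.1) ≤ p.1
      nlinarith
  · rintro ⟨hz1, hz2⟩
    refine ⟨(z.1 - p.1) / (q.1 - p.1), div_nonneg_iff.mpr (Or.inr ⟨by linarith, by linarith⟩), ?_⟩
    have hne : q.1 - p.1 ≠ 0 := by linarith
    apply Prod.ext
    · show z.1 = p.1 + _ * (q.1 - p.1)
      rw [div_mul_cancel₀ _ hne]; ring
    · show z.2 = p.2 + _ * (q.2 - p.2)
      rw [h1]; simp [hz1]

lemma leaf_edgeDrawn (hc : IsConvexRectDrawing G Γ) {x ℓ : V} (h : G.Adj x ℓ)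
    (hℓ : deg G ℓ = 1) (hx : deg G x ≠ 1) :
    ∃ d : Dir, edgeDrawn G Γ x ℓ = hl d (Γ x) := by
  have heq : edgeDrawn G Γ x ℓ = ray (Γ x) (Γ ℓ) := by
    unfold edgeDrawn
    rw [if_pos hℓ, if_neg hx]
    exact Set.union_eq_self_of_subset_right (segment_subset_ray _ _)
  have hne : Γ x ≠ Γ ℓ := fun he => h.ne (hc.1.1 he)
  rcases hc.1.2.1 x ℓ h with hv | hh
  · have h2 : (Γ x).2 ≠ (Γ ℓ).2 := by
      intro h2
      exact hne (Prod.ext hv h2)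
    rcases lt_or_gt_of_ne h2 with hlt | hgt
    · exact ⟨Dir.N, by rw [heq, ray_eq_hl_N hv.symm hlt]⟩
    · exact ⟨Dir.S, by rw [heq, ray_eq_hl_S hv.symm hgt]⟩
  · have h1 : (Γ x).1 ≠ (Γ ℓ).1 := by
      intro h1
      exact hne (Prod.ext h1 hh)
    rcases lt_or_gt_of_ne h1 with hlt | hgt
    · exact ⟨Dir.E, by rw [heq, ray_eq_hl_E hh.symm hlt]⟩
    · exact ⟨Dir.W, by rw [heq, ray_eq_hl_W hh.symm hgt]⟩

def mkShape : Dir → Dir → ℝ × ℝ → Shape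
  | .E, .N, p => .NE p.1 p.2
  | .N, .E, p => .NE p.1 p.2
  | .N, .W, p => .NW p.1 p.2
  | .W, .N, p => .NW p.1 p.2
  | .W, .S, p => .SW p.1 p.2
  | .S, .W, p => .SW p.1 p.2
  | .S, .E, p => .SE p.1 p.2
  | .E, .S, p => .SE p.1 p.2
  | .E, .W, p => .Hh p.2
  | .W, .E, p => .Hh p.2
  | .N, .S, p => .V p.1
  | .S, .N, p => .V p.1
  | _, _, p => .V p.1

lemma mkShape_union {d₁ d₂ : Dir} (h : d₁ ≠ d₂) (p : ℝ × ℝ) :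
    hl d₁ p ∪ hl d₂ p = (mkShape d₁ d₂ p).pts := by
  have hV : hl Dir.N p ∪ hl Dir.S p = (Shape.V p.1).pts := by
    ext z
    simp only [hl, Shape.pts, Set.mem_union, Set.mem_setOf_eq]
    constructor
    · rintro (⟨h1, -⟩ | ⟨h1, -⟩) <;> exact h1
    · intro h1
      rcases le_total p.2 z.2 with h2 | h2
      · exact Or.inl ⟨h1, h2⟩
      · exact Or.inr ⟨h1, h2⟩
  have hH : hl Dir.E p ∪ hl Dir.W p = (Shape.Hh p.2).pts := by
    ext z
    simp only [hl, Shape.pts, Set.mem_union, Set.mem_setOf_eq]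
    constructor
    · rintro (⟨h1, -⟩ | ⟨h1, -⟩) <;> exact h1
    · intro h1
      rcases le_total p.1 z.1 with h2 | h2
      · exact Or.inl ⟨h1, h2⟩
      · exact Or.inr ⟨h1, h2⟩
  cases d₁ <;> cases d₂ <;>
    first
    | exact absurd rfl h
    | exact hV
    | exact hH
    | (rw [Set.union_comm]; exact hV)
    | (rw [Set.union_comm]; exact hH)
    | (ext z
       simp only [hl, mkShape, Shape.pts, Set.mem_union, Set.mem_setOf_eq]
       tauto)
    | (ext z
       simp only [hl, mkShape, Shape.pts, Set.mem_union, Set.mem_setOf_eq])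

lemma fork_corner (hc : IsConvexRectDrawing G Γ) {v ℓ₁ ℓ₂ : V}
    (h1 : G.Adj v ℓ₁) (h2 : G.Adj v ℓ₂) (hne : ℓ₁ ≠ ℓ₂)
    (hd1 : deg G ℓ₁ = 1) (hd2 : deg G ℓ₂ = 1) (hv : deg G v ≠ 1) :
    ∃ s : Shape, edgeDrawn G Γ v ℓ₁ ∪ edgeDrawn G Γ v ℓ₂ = s.pts := by
  obtain ⟨d₁, he1⟩ := leaf_edgeDrawn hc h1 hd1 hv
  obtain ⟨d₂, he2⟩ := leaf_edgeDrawn hc h2 hd2 hv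
  have hdd : d₁ ≠ d₂ := by
    rintro rfl
    obtain ⟨z, hz, hzp⟩ := exists_far_mem_hl d₁ (Γ v)
    have : z ∈ edgeDrawn G Γ v ℓ₁ ∩ edgeDrawn G Γ v ℓ₂ := by
      rw [he1, he2]; exact ⟨hz, hz⟩
    exact hzp (conv_shareL hc h1 h2 hne this)
  exact ⟨mkShape d₁ d₂ (Γ v), by rw [he1, he2, mkShape_union hdd]⟩

/-- a vertex of degree one has a unique neighbor -/
lemma leaf_unique_nbr {a x y : V} (ha : deg G a = 1) (hx : G.Adj a x) (hy : G.Adj a y) :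
    x = y := by
  obtain ⟨z, hz⟩ := Set.ncard_eq_one.mp ha
  have h1 : x ∈ G.neighborSet a := hx
  have h2 : y ∈ G.neighborSet a := hy
  rw [hz] at h1 h2
  rw [h1, h2]

/-- predicate for edges not deleted around the fork `v` -/
def okE (G : SimpleGraph V) (v a b : V) : Prop :=
  G.Adj a b ∧ ¬(a = v ∧ deg G b = 1) ∧ ¬(b = v ∧ deg G a = 1)

/-- the drawing of the tree minus the leaf edges at `v`, punctured at `Γ v` -/
def Zset (G : SimpleGraph V) (Γ : V → ℝ × ℝ) (v : V) : Set (ℝ × ℝ) :=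
  (⋃ (a : V) (b : V) (_ : okE G v a b), edgeDrawn G Γ a b) \ {Γ v}

end Drawing


section ZLemmas
variable {V : Type*} [Fintype V] {G : SimpleGraph V} {Γ : V → ℝ × ℝ}

lemma mem_Z_of_edge {v a b : V} {p : ℝ × ℝ} (hok : okE G v a b)
    (hp : p ∈ edgeDrawn G Γ a b) (hne : p ≠ Γ v) : p ∈ Zset G Γ v := by
  refine ⟨?_, by simpa using hne⟩
  exact Set.mem_iUnion.mpr ⟨a, Set.mem_iUnion.mpr ⟨b, Set.mem_iUnion.mpr ⟨hok, hp⟩⟩⟩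

lemma okE_vt {v t : V} (hvt : G.Adj v t) (htd : 2 ≤ deg G t) : okE G v v t :=
  ⟨hvt, fun h => by omega, fun h => hvt.ne' h.1⟩

lemma t_mem_Z (hinj : Function.Injective Γ) {v t : V} (hvt : G.Adj v t)
    (htd : 2 ≤ deg G t) : Γ t ∈ Zset G Γ v :=
  mem_Z_of_edge (okE_vt hvt htd) (endpoints_mem_edgeDrawn v t).2
    (fun h => hvt.ne' (hinj h))

lemma edge_avoid_K (hconv : IsConvexRectDrawing G Γ) {v ℓ₁ ℓ₂ a b : V}
    (h : G.Adj a b) (hL1 : G.Adj v ℓ₁) (hL2 : G.Adj v ℓ₂)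
    (hd1 : deg G ℓ₁ = 1) (hd2 : deg G ℓ₂ = 1)
    (ha : a ≠ v) (hb : b ≠ v)
    (ha1 : ¬(G.Adj v a ∧ deg G a = 1)) (hb1 : ¬(G.Adj v b ∧ deg G b = 1)) :
    edgeDrawn G Γ a b ∩ (edgeDrawn G Γ v ℓ₁ ∪ edgeDrawn G Γ v ℓ₂) = ∅ := by
  have key : ∀ ℓ : V, G.Adj v ℓ → deg G ℓ = 1 →
      edgeDrawn G Γ a b ∩ edgeDrawn G Γ v ℓ = ∅ := by
    intro ℓ hL hd
    refine conv_disjoint hconv h hL ha ?_ hb ?_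
    · rintro rfl; exact ha1 ⟨hL, hd⟩
    · rintro rfl; exact hb1 ⟨hL, hd⟩
  rw [Set.inter_union_distrib_left, key ℓ₁ hL1 hd1, key ℓ₂ hL2 hd2, Set.union_self]

lemma not_leafnbr_of_edge {v a b : V} (h : G.Adj a b) (hb : b ≠ v) :
    ¬(G.Adj v a ∧ deg G a = 1) := by
  rintro ⟨hadj, hd⟩
  exact hb (leaf_unique_nbr hd h hadj.symm)

lemma chain_walk (hconv : IsConvexRectDrawing G Γ) {v t ℓ₁ ℓ₂ : V}
    (hvt : G.Adj v t) (htd : 2 ≤ deg G t)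
    (hL1 : G.Adj v ℓ₁) (hL2 : G.Adj v ℓ₂) (hd1 : deg G ℓ₁ = 1) (hd2 : deg G ℓ₂ = 1) :
    ∀ {a b : V} (w : G.Walk a b), b = t →
      (∀ u ∈ w.support, u ≠ v ∧ ¬(G.Adj v u ∧ deg G u = 1)) →
      ∃ T : Set (ℝ × ℝ), IsPreconnected T ∧ Γ a ∈ T ∧ Γ t ∈ T ∧ T ⊆ Zset G Γ v := by
  intro a b w
  induction w with
  | nil =>
    rintro rfl _
    exact ⟨{Γ _}, isPreconnected_singleton, rfl, rfl,
      Set.singleton_subset_iff.mpr (t_mem_Z hconv.1.1 hvt htd)⟩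
  | @cons x y z hadj q ih =>
    rintro rfl hsup
    obtain ⟨T, hT, hc', ht', hTZ⟩ := ih rfl (fun u hu => hsup u (by simp [hu]))
    have ha := hsup x (by simp)
    have hcc := hsup y (by simp)
    have hdr : edgeDrawn G Γ x y ⊆ Zset G Γ v := by
      intro p hp
      refine mem_Z_of_edge ⟨hadj, fun h => ha.1 h.1, fun h => hcc.1 h.1⟩ hp ?_
      rintro rfl
      have hK := (endpoints_mem_edgeDrawn (G := G) (Γ := Γ) v ℓ₁).1
      have := edge_avoid_K hconv hadj hL1 hL2 hd1 hd2 ha.1 hcc.1 ha.2 hcc.2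
      exact absurd (Set.mem_inter hp (Set.mem_union_left _ hK))
        (by rw [this]; exact Set.notMem_empty _)
    refine ⟨edgeDrawn G Γ x y ∪ T, ?_, Or.inl (endpoints_mem_edgeDrawn x y).1,
      Or.inr ht', Set.union_subset hdr hTZ⟩
    exact IsPreconnected.union (Γ y) (endpoints_mem_edgeDrawn x y).2 hc'
      (edgeDrawn_preconnected x y) hT

lemma exists_good_walk (htree : G.IsTree) (hno2 : ∀ u, deg G u ≠ 2)
    {v t : V} (hvt : G.Adj v t) (htd : 2 ≤ deg G t)
    (huniq : ∀ u, G.Adj v u → u ≠ t → deg G u = 1)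
    {a : V} (ha : a ≠ v) (hal : ¬(G.Adj v a ∧ deg G a = 1)) :
    ∃ w : G.Walk a t, ∀ u ∈ w.support, u ≠ v ∧ ¬(G.Adj v u ∧ deg G u = 1) := by
  classical
  obtain ⟨w0⟩ := htree.isConnected.preconnected a t
  refine ⟨w0.toPath.1, fun u hu => ?_⟩
  have hdeg_or : ∀ x, x ∈ w0.toPath.1.support → x = a ∨ x = t ∨ 2 ≤ deg G x := by
    intro x hx
    by_cases h1 : x = a
    · exact Or.inl h1
    by_cases h2 : x = t
    · exact Or.inr (Or.inl h2)
    exact Or.inr (Or.inr (interior_big_deg w0.toPath.1 w0.toPath.2 hx h1 h2))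
  constructor
  · rintro rfl
    obtain ⟨u₁, u₂, h12, ha1, ha2, hs1, hs2⟩ :=
      interior_two_adj w0.toPath.1 w0.toPath.2 hu
        (Ne.symm ha) (fun h => G.irrefl (h ▸ hvt))
    have hkey : ∀ x, G.Adj u x → x ∈ w0.toPath.1.support → x = t := by
      intro x hx hxs
      by_contra hxt
      have hxd := huniq x hx hxt
      rcases hdeg_or x hxs with rfl | rfl | h3
      · exact hal ⟨hx, hxd⟩
      · exact hxt rfl
      · omega
    have e1 := hkey u₁ ha1 hs1
    have e2 := hkey u₂ ha2 hs2
    exact h12 (e1.trans e2.symm)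
  · rintro ⟨hadj, hdeg1⟩
    rcases hdeg_or u hu with rfl | rfl | h3
    · exact hal ⟨hadj, hdeg1⟩
    · omega
    · omega

lemma seg_param_mem {p q : ℝ × ℝ} {θ : ℝ} (hθ : θ ∈ Set.Icc (0:ℝ) 1) :
    p + θ • (q - p) ∈ segment ℝ p q := by
  rw [segment_eq_image']
  exact ⟨θ, hθ, rfl⟩

lemma Z_preconnected (htree : G.IsTree) (hno2 : ∀ u, deg G u ≠ 2)
    (hconv : IsConvexRectDrawing G Γ) {v t ℓ₁ ℓ₂ : V}
    (hvd : 2 ≤ deg G v) (hvt : G.Adj v t) (htd : 2 ≤ deg G t)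
    (huniq : ∀ u, G.Adj v u → u ≠ t → deg G u = 1)
    (hL1 : G.Adj v ℓ₁) (hL2 : G.Adj v ℓ₂) (hd1 : deg G ℓ₁ = 1) (hd2 : deg G ℓ₂ = 1) :
    IsPreconnected (Zset G Γ v) := by
  have hseg : edgeDrawn G Γ v t = segment ℝ (Γ v) (Γ t) := by
    unfold edgeDrawn
    rw [if_neg (by omega : ¬ deg G t = 1), if_neg (by omega : ¬ deg G v = 1),
      Set.union_self]
  have hsegr : edgeDrawn G Γ t v = segment ℝ (Γ v) (Γ t) := by
    unfold edgeDrawn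
    rw [if_neg (by omega : ¬ deg G v = 1), if_neg (by omega : ¬ deg G t = 1),
      Set.union_self, segment_symm]
  have hwne : Γ t - Γ v ≠ 0 := sub_ne_zero.mpr (fun h => hvt.ne' (hconv.1.1 h))
  -- the punctured closed back edge
  set T0 : Set (ℝ × ℝ) := (fun θ : ℝ => Γ v + θ • (Γ t - Γ v)) '' Set.Ioc 0 1 with hT0
  have hT0pre : IsPreconnected T0 := by
    apply IsPreconnected.image isPreconnected_Ioc
    exact (continuous_const.add (continuous_id.smul continuous_const)).continuousOn
  have hT0t : Γ t ∈ T0 := ⟨1, ⟨zero_lt_one, le_refl 1⟩, by simp⟩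
  have hT0Z : T0 ⊆ Zset G Γ v := by
    rintro p ⟨θ, hθ, rfl⟩
    refine mem_Z_of_edge (okE_vt hvt htd) ?_ ?_
    · rw [hseg]; exact seg_param_mem ⟨le_of_lt hθ.1, hθ.2⟩
    · intro h
      have : θ • (Γ t - Γ v) = 0 := by
        have := congrArg (fun z => z - Γ v) h
        simpa [add_sub_cancel_left] using this
      rcases smul_eq_zero.mp this with h' | h'
      · exact (ne_of_gt hθ.1) h'
      · exact hwne h'
  have hT0mem : ∀ p ∈ segment ℝ (Γ v) (Γ t), p ≠ Γ v → p ∈ T0 := by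
    intro p hp hpne
    rw [segment_eq_image'] at hp
    obtain ⟨θ, hθ, rfl⟩ := hp
    have hθ0 : θ ≠ 0 := by
      rintro rfl
      simp at hpne
    exact ⟨θ, ⟨lt_of_le_of_ne hθ.1 (Ne.symm hθ0), hθ.2⟩, rfl⟩
  apply isPreconnected_of_forall (Γ t)
  rintro y ⟨hyU, hyne⟩
  rw [Set.mem_singleton_iff] at hyne
  obtain ⟨a, hrest⟩ := Set.mem_iUnion.mp hyU
  obtain ⟨b, hrest⟩ := Set.mem_iUnion.mp hrest
  obtain ⟨hok, hy⟩ := Set.mem_iUnion.mp hrest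
  by_cases hav : a = v
  · subst hav
    have hbt : b = t := by
      by_contra hbt
      exact hok.2.1 ⟨rfl, huniq b hok.1 hbt⟩
    subst hbt
    rw [hseg] at hy
    exact ⟨T0, hT0Z, hT0t, hT0mem y hy hyne, hT0pre⟩
  · by_cases hbv : b = v
    · subst hbv
      have hat : a = t := by
        by_contra hat
        exact hok.2.2 ⟨rfl, huniq a hok.1.symm hat⟩
      subst hat
      rw [hsegr] at hy
      exact ⟨T0, hT0Z, hT0t, hT0mem y hy hyne, hT0pre⟩
    · have ha1 : ¬(G.Adj v a ∧ deg G a = 1) := not_leafnbr_of_edge hok.1 hbv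
      have hb1 : ¬(G.Adj v b ∧ deg G b = 1) := not_leafnbr_of_edge hok.1.symm hav
      obtain ⟨w, hw⟩ := exists_good_walk htree hno2 hvt htd huniq hav ha1
      obtain ⟨T, hT, haT, htT, hTZ⟩ := chain_walk hconv hvt htd hL1 hL2 hd1 hd2 w rfl hw
      have hdr : edgeDrawn G Γ a b ⊆ Zset G Γ v := by
        intro p hp
        refine mem_Z_of_edge hok hp ?_
        rintro rfl
        have hK := (endpoints_mem_edgeDrawn (G := G) (Γ := Γ) v ℓ₁).1
        have hE := edge_avoid_K hconv hok.1 hL1 hL2 hd1 hd2 hav hbv ha1 hb1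
        exact absurd (Set.mem_inter hp (Set.mem_union_left _ hK))
          (by rw [hE]; exact Set.notMem_empty _)
      refine ⟨edgeDrawn G Γ a b ∪ T, Set.union_subset hdr hTZ, Or.inr htT,
        Or.inl hy, ?_⟩
      exact IsPreconnected.union (Γ a) (endpoints_mem_edgeDrawn a b).1 haT
        (edgeDrawn_preconnected a b) hT

lemma Z_avoid_K (hconv : IsConvexRectDrawing G Γ) {v t ℓ₁ ℓ₂ : V}
    (hvd : 2 ≤ deg G v) (hvt : G.Adj v t) (htd : 2 ≤ deg G t)
    (huniq : ∀ u, G.Adj v u → u ≠ t → deg G u = 1)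
    (hL1 : G.Adj v ℓ₁) (hL2 : G.Adj v ℓ₂) (hd1 : deg G ℓ₁ = 1) (hd2 : deg G ℓ₂ = 1) :
    ∀ p ∈ Zset G Γ v, p ∉ edgeDrawn G Γ v ℓ₁ ∪ edgeDrawn G Γ v ℓ₂ := by
  rintro p ⟨hpU, hpne⟩ hpK
  rw [Set.mem_singleton_iff] at hpne
  obtain ⟨a, hrest⟩ := Set.mem_iUnion.mp hpU
  obtain ⟨b, hrest⟩ := Set.mem_iUnion.mp hrest
  obtain ⟨hok, hp⟩ := Set.mem_iUnion.mp hrest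
  have htℓ1 : t ≠ ℓ₁ := by intro h; rw [h] at htd; omega
  have htℓ2 : t ≠ ℓ₂ := by intro h; rw [h] at htd; omega
  by_cases hav : a = v
  · subst hav
    have hbt : b = t := by
      by_contra hbt
      exact hok.2.1 ⟨rfl, huniq b hok.1 hbt⟩
    subst hbt
    rcases hpK with hpK | hpK
    · exact hpne (conv_shareL hconv hok.1 hL1 htℓ1 ⟨hp, hpK⟩)
    · exact hpne (conv_shareL hconv hok.1 hL2 htℓ2 ⟨hp, hpK⟩)
  · by_cases hbv : b = v
    · subst hbv
      have hat : a = t := by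
        by_contra hat
        exact hok.2.2 ⟨rfl, huniq a hok.1.symm hat⟩
      subst hat
      rcases hpK with hpK | hpK
      · exact hpne (conv_shareR hconv hok.1 hL1 htℓ1 ⟨hp, hpK⟩)
      · exact hpne (conv_shareR hconv hok.1 hL2 htℓ2 ⟨hp, hpK⟩)
    · have ha1 : ¬(G.Adj v a ∧ deg G a = 1) := not_leafnbr_of_edge hok.1 hbv
      have hb1 : ¬(G.Adj v b ∧ deg G b = 1) := not_leafnbr_of_edge hok.1.symm hav
      have hE := edge_avoid_K hconv hok.1 hL1 hL2 hd1 hd2 hav hbv ha1 hb1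
      exact absurd (Set.mem_inter hp hpK) (by rw [hE]; exact Set.notMem_empty _)

end ZLemmas

/-- Let `T` be a tree with maximum degree at most 4 and no vertex of degree 2
that admits a convex rectilinear planar drawing. Then `T` contains at most two
splitters. -/
theorem stmt7 {V : Type*} [Fintype V] (G : SimpleGraph V)
    (htree : G.IsTree) (hdeg : ∀ v, deg G v ≤ 4) (hno2 : ∀ v, deg G v ≠ 2)
    (hdraw : HasConvexDrawing G) :
    {v | IsSplitter G v}.ncard ≤ 2 := by
  classical
  rw [← not_lt]
  intro hcon
  have hS3 : 3 ≤ {v | IsSplitter G v}.ncard := hcon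
  obtain ⟨Γ, hconv⟩ := hdraw
  obtain ⟨s0, hs0⟩ := Set.nonempty_of_ncard_ne_zero
    (show {v | IsSplitter G v}.ncard ≠ 0 by omega)
  have hs0 : IsSplitter G s0 := hs0
  have hforks := count_forks htree hno2 hS3
  set Fk : Finset V := Finset.univ.filter
    (fun v => 2 ≤ deg G v ∧ {u | G.Adj v u ∧ 2 ≤ deg G u}.ncard ≤ 1) with hFk
  have hFk5 : 5 ≤ Fk.card := by
    rwa [setcard_eq_filter
      (fun v => 2 ≤ deg G v ∧ {u | G.Adj v u ∧ 2 ≤ deg G u}.ncard ≤ 1)] at hforks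
  have hdeg2 : ∀ v ∈ Fk, 2 ≤ deg G v := by
    intro v hv
    simp only [hFk, Finset.mem_filter, Finset.mem_univ, true_and] at hv
    exact hv.1
  have hdata : ∀ v, v ∈ Fk → ∃ t ℓ₁ ℓ₂ : V,
      (G.Adj v t ∧ 2 ≤ deg G t ∧ (∀ u, G.Adj v u → u ≠ t → deg G u = 1)) ∧
      (ℓ₁ ≠ ℓ₂ ∧ G.Adj v ℓ₁ ∧ G.Adj v ℓ₂ ∧ deg G ℓ₁ = 1 ∧ deg G ℓ₂ = 1) := by
    intro v hv
    simp only [hFk, Finset.mem_filter, Finset.mem_univ, true_and] at hv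
    obtain ⟨hdv, hnld⟩ := hv
    have h1 := nld_pos htree hno2 hs0 hdv
    have hone : {u | G.Adj v u ∧ 2 ≤ deg G u}.ncard = 1 := le_antisymm hnld h1
    obtain ⟨t, ht⟩ := Set.ncard_eq_one.mp hone
    have hvt : G.Adj v t ∧ 2 ≤ deg G t := by
      have : t ∈ {u | G.Adj v u ∧ 2 ≤ deg G u} := by rw [ht]; exact rfl
      exact this
    have huniq : ∀ u, G.Adj v u → u ≠ t → deg G u = 1 := by
      intro u hu hut
      have hnotin : u ∉ {u | G.Adj v u ∧ 2 ≤ deg G u} := by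
        rw [ht]; simpa using hut
      have h2 : ¬ 2 ≤ deg G u := fun hh => hnotin ⟨hu, hh⟩
      have h3 := deg_pos_of_adj hu.symm
      have h4 := hno2 u
      omega
    have hd3 : 3 ≤ deg G v := by have := hno2 v; omega
    have htv : t ∈ G.neighborSet v := hvt.1
    have hdiff : 1 < (G.neighborSet v \ {t}).ncard := by
      rw [Set.ncard_diff_singleton_of_mem htv]
      have hh : deg G v = (G.neighborSet v).ncard := rfl
      omega
    rw [Set.one_lt_ncard_iff (Set.toFinite _)] at hdiff
    obtain ⟨ℓ₁, ℓ₂, hm1, hm2, hne12⟩ := hdiff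
    obtain ⟨ha1, ht1⟩ := hm1
    obtain ⟨ha2, ht2⟩ := hm2
    exact ⟨t, ℓ₁, ℓ₂, ⟨hvt.1, hvt.2, huniq⟩, hne12, ha1, ha2,
      huniq ℓ₁ ha1 (by simpa using ht1), huniq ℓ₂ ha2 (by simpa using ht2)⟩
  choose! tf l1 l2 hP hQ using hdata
  set KK : V → Set (ℝ × ℝ) :=
    fun v => edgeDrawn G Γ v (l1 v) ∪ edgeDrawn G Γ v (l2 v) with hKK
  have hKmem : ∀ v, Γ v ∈ KK v := fun v =>
    Set.mem_union_left _ (endpoints_mem_edgeDrawn (G := G) (Γ := Γ) v (l1 v)).1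
  have hshape : ∀ v, v ∈ Fk → ∃ s : Shape, KK v = s.pts := by
    intro v hv
    obtain ⟨hne, hA1, hA2, hD1, hD2⟩ := hQ v hv
    exact fork_corner hconv hA1 hA2 hne hD1 hD2 (by have := hdeg2 v hv; omega)
  choose! sh hsh using hshape
  have hreg : ∀ v, v ∈ Fk → ∃ r : Bool, Zset G Γ v ⊆ (sh v).reg r := by
    intro v hv
    obtain ⟨hT1, hT2, hT3⟩ := hP v hv
    obtain ⟨hne, hA1, hA2, hD1, hD2⟩ := hQ v hv
    have hpre := Z_preconnected htree hno2 hconv (hdeg2 v hv) hT1 hT2 hT3 hA1 hA2 hD1 hD2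
    have hsub : Zset G Γ v ⊆ (sh v).reg false ∪ (sh v).reg true := by
      intro p hp
      apply Shape.cover_reg
      rw [← hsh v hv]
      exact Z_avoid_K hconv (hdeg2 v hv) hT1 hT2 hT3 hA1 hA2 hD1 hD2 p hp
    rcases hpre.subset_or_subset (Shape.isOpen_reg _ _) (Shape.isOpen_reg _ _)
      (Shape.disjoint_reg _) hsub with h | h
    · exact ⟨false, h⟩
    · exact ⟨true, h⟩
  choose! rg hrg using hreg
  have hcross : ∀ v ∈ Fk, ∀ w ∈ Fk, v ≠ w → KK w ⊆ Zset G Γ v := by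
    intro v hv w hw hvw
    obtain ⟨hneW, hA1W, hA2W, hD1W, hD2W⟩ := hQ w hw
    obtain ⟨hneV, hA1V, hA2V, hD1V, hD2V⟩ := hQ v hv
    have hdv := hdeg2 v hv
    have hdw := hdeg2 w hw
    have hwv : w ≠ v := Ne.symm hvw
    have key : ∀ ℓ, G.Adj w ℓ → deg G ℓ = 1 → edgeDrawn G Γ w ℓ ⊆ Zset G Γ v := by
      intro ℓ hA hD p hp
      have hℓv : ℓ ≠ v := by intro h; rw [h] at hD; omega
      have hdisj : ∀ ℓ' : V, G.Adj v ℓ' → deg G ℓ' = 1 →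
          edgeDrawn G Γ w ℓ ∩ edgeDrawn G Γ v ℓ' = ∅ := by
        intro ℓ' hA' hD'
        refine conv_disjoint hconv hA hA' hwv ?_ hℓv ?_
        · intro h; rw [h, hD'] at hdw; omega
        · intro h
          subst h
          exact hwv (leaf_unique_nbr hD hA.symm hA'.symm)
      refine mem_Z_of_edge ⟨hA, ?_, ?_⟩ hp ?_
      · rintro ⟨h1, -⟩; exact hwv h1
      · rintro ⟨h1, -⟩; exact hℓv h1
      · intro h
        rcases hKmem v with hK | hK
        · refine absurd (Set.mem_inter (h ▸ hp) hK) ?_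
          rw [hdisj (l1 v) hA1V hD1V]
          exact Set.notMem_empty _
        · refine absurd (Set.mem_inter (h ▸ hp) hK) ?_
          rw [hdisj (l2 v) hA2V hD2V]
          exact Set.notMem_empty _
    rintro p (hp | hp)
    · exact key (l1 w) hA1W hD1W hp
    · exact key (l2 w) hA2W hD2W hp
  obtain ⟨v, hv, w, hw, hvw, heq⟩ :=
    Finset.exists_ne_map_eq_of_card_lt_of_maps_to
      (s := Fk) (t := Finset.range 4)
      (f := fun v => (sh v).dio (rg v))
      (by rw [Finset.card_range]; omega)
      (fun v _ => Finset.mem_range.mpr (Shape.dio_lt_four _ _))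
  exact Shape.clash (sh v) (sh w) (rg v) (rg w) heq
    (by rw [← hsh w hw]; exact (hcross v hv w hw hvw).trans (hrg v hv))
    (by rw [← hsh v hv]; exact (hcross w hw v hv (Ne.symm hvw)).trans (hrg w hw))

end TurnRegular
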